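/- Let Q : Ω → ℝ be integrable with E[Q] < 0, let b : Ω → [0,∞) be tempered, and for each j ∈ ℕ let η_j : Ω → [0,∞) be measurable with η_j(ω) ≤ b(θ^j ω) for all ω. If η_j → 0 in probability as j → ∞, then the random variables S_k(ω) = Σ_{j=0}^{k} exp( Σ_{j'=j}^{k} Q(θ^{j'} ω) )·η_j(ω) converge to 0 in probability as k → ∞. -/

import Mathlib

open Filter MeasureTheory
set_option linter.unusedSectionVars false
set_option linter.unusedVariables false

namespace Stmt5Aux

variable {Ω : Type*} [MeasurableSpace Ω] {μ : MeasureTheory.Measure Ω}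

/-- Partial sums along iterates. -/
noncomputable def PS (g : Ω → ℝ) (σ : Ω → Ω) (n : ℕ) (ω : Ω) : ℝ :=
  ∑ l ∈ Finset.range n, g (σ^[l] ω)

lemma PS_succ (g : Ω → ℝ) (σ : Ω → Ω) (n : ℕ) (ω : Ω) :
    PS g σ (n + 1) ω = g ω + PS g σ n (σ ω) := by
  simp only [PS, Finset.sum_range_succ']
  simp only [Function.iterate_succ_apply, Function.iterate_zero_apply]
  exact add_comm _ _

lemma PS_measurable {g : Ω → ℝ} {σ : Ω → Ω} (hg : Measurable g) (hσ : Measurable σ) (n : ℕ) :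
    Measurable (PS g σ n) :=
  Finset.measurable_sum _ fun l _ => hg.comp (hσ.iterate l)

/-- Running maxima (Garsia's construction). -/
noncomputable def MX (g : Ω → ℝ) (σ : Ω → Ω) : ℕ → Ω → ℝ
  | 0 => fun _ => 0
  | (N + 1) => fun ω => max 0 (g ω + MX g σ N (σ ω))

lemma MX_nonneg (g : Ω → ℝ) (σ : Ω → Ω) : ∀ N ω, 0 ≤ MX g σ N ω
  | 0, _ => le_refl 0
  | (N + 1), ω => le_max_left _ _

lemma MX_mono (g : Ω → ℝ) (σ : Ω → Ω) : ∀ N ω, MX g σ N ω ≤ MX g σ (N + 1) ω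
  | 0, ω => MX_nonneg g σ 1 ω
  | (N + 1), ω => by
    simp only [MX]
    exact max_le_max le_rfl (add_le_add le_rfl (MX_mono g σ N (σ ω)))

lemma MX_ge (g : Ω → ℝ) (σ : Ω → Ω) : ∀ N k, k ≤ N → ∀ ω, PS g σ k ω ≤ MX g σ N ω
  | N, 0, _, ω => by simpa [PS] using MX_nonneg g σ N ω
  | 0, (k + 1), hk, ω => absurd hk (by omega)
  | (N + 1), (k + 1), hk, ω => by
    rw [PS_succ]
    simp only [MX]
    exact le_max_of_le_right
      (add_le_add le_rfl (MX_ge g σ N k (Nat.succ_le_succ_iff.mp hk) (σ ω)))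

lemma MX_measurable {g : Ω → ℝ} {σ : Ω → Ω} (hg : Measurable g) (hσ : Measurable σ) :
    ∀ N, Measurable (MX g σ N)
  | 0 => measurable_const
  | (N + 1) => by
    simp only [MX]
    exact measurable_const.max (hg.add ((MX_measurable hg hσ N).comp hσ))

lemma MX_integrable {g : Ω → ℝ} {σ : Ω → Ω} (hσ : MeasurePreserving σ μ μ)
    (hgi : Integrable g μ) : ∀ N, Integrable (MX g σ N) μ
  | 0 => by simpa [MX] using (integrable_zero Ω ℝ μ)
  | (N + 1) => by
    have h1 : Integrable (fun ω => g ω + MX g σ N (σ ω)) μ :=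
      hgi.add ((hσ.integrable_comp (MX_integrable hσ hgi N).1).mpr (MX_integrable hσ hgi N))
    have h2 := h1.pos_part
    simp only [MX]
    refine h2.congr (Filter.Eventually.of_forall fun ω => ?_)
    simp [max_comm]

lemma integral_comp_mp {σ : Ω → Ω} (hσ : MeasurePreserving σ μ μ) {f : Ω → ℝ}
    (hf : AEStronglyMeasurable f μ) :
    ∫ ω, f (σ ω) ∂μ = ∫ ω, f ω ∂μ := by
  have h := integral_map (φ := σ) hσ.measurable.aemeasurable (f := f) (by rwa [hσ.map_eq])
  rw [hσ.map_eq] at h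
  exact h.symm

/-- Maximal ergodic lemma (Garsia). -/
lemma maximal [IsProbabilityMeasure μ] {σ : Ω → Ω} (hσ : MeasurePreserving σ μ μ)
    {g : Ω → ℝ} (hg : Measurable g) (hgi : Integrable g μ)
    (hsup : ∀ᵐ ω ∂μ, ∃ n, 0 < PS g σ n ω) :
    0 ≤ ∫ ω, g ω ∂μ := by
  set A : ℕ → Set Ω := fun N => {ω | 0 < MX g σ (N + 1) ω} with hA
  have hAmeas : ∀ N, MeasurableSet (A N) := fun N =>
    measurableSet_lt measurable_const (MX_measurable hg hσ.measurable (N + 1))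
  have hAmono : Monotone A := by
    refine monotone_nat_of_le_succ fun N ω hω => ?_
    exact lt_of_lt_of_le hω (MX_mono g σ (N + 1) ω)
  have hMi := MX_integrable (g := g) hσ hgi
  have hstep : ∀ N, 0 ≤ ∫ ω in A N, g ω ∂μ := by
    intro N
    have hMσi : Integrable (fun ω => MX g σ N (σ ω)) μ :=
      (hσ.integrable_comp (hMi N).1).mpr (hMi N)
    have key : ∫ ω in A N, g ω ∂μ
        = ∫ ω in A N, (MX g σ (N + 1) ω - MX g σ N (σ ω)) ∂μ := by
      refine setIntegral_congr_fun (hAmeas N) fun ω hω => ?_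
      have h1 : 0 < g ω + MX g σ N (σ ω) := by
        have h0 : 0 < MX g σ (N + 1) ω := hω
        simp only [MX] at h0
        rcases lt_max_iff.mp h0 with h | h
        · exact absurd h (lt_irrefl 0)
        · exact h
      simp only [MX, max_eq_right h1.le]
      ring
    have e1 : ∫ ω in A N, MX g σ (N + 1) ω ∂μ = ∫ ω, MX g σ (N + 1) ω ∂μ := by
      have hc : ∫ ω in (A N)ᶜ, MX g σ (N + 1) ω ∂μ = 0 := by
        rw [setIntegral_congr_fun (hAmeas N).compl (g := fun _ => (0 : ℝ))]
        · simp
        · intro ω hω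
          have h0 : ¬ (0 < MX g σ (N + 1) ω) := hω
          exact le_antisymm (not_lt.mp h0) (MX_nonneg g σ (N + 1) ω)
      have := integral_add_compl (hAmeas N) (hMi (N + 1))
      rw [hc, add_zero] at this
      exact this
    have e2 : ∫ ω in A N, MX g σ N (σ ω) ∂μ ≤ ∫ ω, MX g σ N (σ ω) ∂μ :=
      setIntegral_le_integral hMσi (Filter.Eventually.of_forall fun ω => MX_nonneg g σ N (σ ω))
    have e3 : ∫ ω, MX g σ N (σ ω) ∂μ = ∫ ω, MX g σ N ω ∂μ :=
      integral_comp_mp hσ (hMi N).1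
    have e4 : ∫ ω, MX g σ N ω ∂μ ≤ ∫ ω, MX g σ (N + 1) ω ∂μ :=
      integral_mono (hMi N) (hMi (N + 1)) (fun ω => MX_mono g σ N ω)
    have e5 := integral_sub ((hMi (N + 1)).integrableOn) (hMσi.integrableOn)
      (μ := μ.restrict (A N))
    rw [key, e5]
    linarith
  have hcover : ∀ᵐ ω ∂μ, ω ∈ ⋃ N, A N := by
    filter_upwards [hsup] with ω h
    obtain ⟨n, hn⟩ := h
    match n, hn with
    | 0, hn => simp [PS] at hn
    | (N + 1), hn =>
      exact Set.mem_iUnion.mpr ⟨N, lt_of_lt_of_le hn (MX_ge g σ (N + 1) (N + 1) le_rfl ω)⟩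
  have hnull : μ (⋃ N, A N)ᶜ = 0 := by
    rw [ae_iff] at hcover
    exact hcover
  have hlim := tendsto_setIntegral_of_monotone hAmeas hAmono (hgi.integrableOn)
  have hU : ∫ ω in ⋃ N, A N, g ω ∂μ = ∫ ω, g ω ∂μ := by
    have h := integral_add_compl (MeasurableSet.iUnion hAmeas) hgi
    rw [show μ.restrict (⋃ N, A N)ᶜ = 0 from Measure.restrict_eq_zero.mpr hnull,
      integral_zero_measure, add_zero] at h
    exact h
  rw [← hU]
  exact ge_of_tendsto' hlim hstep

/-- Upper half of Birkhoff for negative mean: partial sums are a.s. bounded above. -/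
lemma ae_bddAbove [IsProbabilityMeasure μ] {σ : Ω → Ω} (hσ : MeasurePreserving σ μ μ)
    (herg : ∀ s, MeasurableSet s → σ ⁻¹' s = s → μ s = 0 ∨ μ s = 1)
    {g : Ω → ℝ} (hg : Measurable g) (hgi : Integrable g μ) (hneg : ∫ ω, g ω ∂μ < 0) :
    ∀ᵐ ω ∂μ, ∃ C, ∀ n, PS g σ n ω ≤ C := by
  set E : Set Ω := {ω | ∀ C : ℝ, ∃ n, C < PS g σ n ω} with hE
  have hEmeas : MeasurableSet E := by
    have hEeq : E = ⋂ (C : ℕ), ⋃ n, {ω | (C : ℝ) < PS g σ n ω} := by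
      ext ω
      simp only [hE, Set.mem_iInter, Set.mem_iUnion, Set.mem_setOf_eq]
      constructor
      · intro h C; exact h C
      · intro h C
        obtain ⟨mC, hmC⟩ := exists_nat_gt C
        obtain ⟨n, hn⟩ := h mC
        exact ⟨n, lt_trans hmC hn⟩
    rw [hEeq]
    exact MeasurableSet.iInter fun C => MeasurableSet.iUnion fun n =>
      measurableSet_lt measurable_const (PS_measurable hg hσ.measurable n)
  have hinv : σ ⁻¹' E = E := by
    ext ω
    simp only [Set.mem_preimage, hE, Set.mem_setOf_eq]
    constructor
    · intro h C
      obtain ⟨n, hn⟩ := h (C - g ω)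
      exact ⟨n + 1, by rw [PS_succ]; linarith⟩
    · intro h C
      obtain ⟨n, hn⟩ := h (max (g ω + C) 0)
      match n, hn with
      | 0, hn =>
        exfalso
        simp only [PS, Finset.range_zero, Finset.sum_empty] at hn
        exact absurd hn (not_lt.mpr (le_max_right _ _))
      | (m + 1), hn =>
        refine ⟨m, ?_⟩
        rw [PS_succ] at hn
        have := le_max_left (g ω + C) 0
        linarith
  rcases herg E hEmeas hinv with h0 | h1
  · have hae : ∀ᵐ ω ∂μ, ω ∉ E := measure_eq_zero_iff_ae_notMem.mp h0
    filter_upwards [hae] with ω hω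
    simp only [hE, Set.mem_setOf_eq] at hω
    push_neg at hω
    obtain ⟨C, hC⟩ := hω
    exact ⟨C, hC⟩
  · exfalso
    have hEc : μ Eᶜ = 0 := by
      have := measure_compl hEmeas (measure_ne_top μ E)
      rw [h1, measure_univ] at this
      simpa using this
    have hsup : ∀ᵐ ω ∂μ, ∃ n, 0 < PS g σ n ω := by
      have hae : ∀ᵐ ω ∂μ, ω ∉ Eᶜ := measure_eq_zero_iff_ae_notMem.mp hEc
      filter_upwards [hae] with ω hω
      have hmem : ω ∈ E := not_not.mp hω
      exact hmem 0
    exact absurd (maximal hσ hg hgi hsup) (not_le.mpr hneg)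

end Stmt5Aux

/-- A measurable function `b : Ω → [0,∞)` is *tempered* with respect to an invertible
measure-preserving transformation `θ` (with inverse `θinv`) if for a.e. `ω` one has
`(1/|n|) · log⁺ b(θⁿ ω) → 0` as `|n| → ∞` (`n ∈ ℤ`), where `log⁺ t = max (log t) 0`. -/
def IsTempered {Ω : Type*} [MeasurableSpace Ω] (μ : MeasureTheory.Measure Ω)
    (θ θinv : Ω → Ω) (b : Ω → ℝ) : Prop :=
  ∀ᵐ ω ∂μ,
    Tendsto (fun n : ℕ => max (Real.log (b (θ^[n] ω))) 0 / (n : ℝ)) atTop (nhds 0) ∧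
    Tendsto (fun n : ℕ => max (Real.log (b (θinv^[n] ω))) 0 / (n : ℝ)) atTop (nhds 0)

theorem statement5
    {Ω : Type*} [MeasurableSpace Ω] {μ : Measure Ω} [IsProbabilityMeasure μ]
    {θ θinv : Ω → Ω}
    (hinv₁ : Function.LeftInverse θinv θ) (hinv₂ : Function.RightInverse θinv θ)
    (hθ : Ergodic θ μ) (hθinv : MeasurePreserving θinv μ μ)
    {Q : Ω → ℝ} (hQ : Integrable Q μ) (hQneg : ∫ ω, Q ω ∂μ < 0)
    {b : Ω → ℝ} (hb_meas : Measurable b) (hb_nonneg : ∀ ω, 0 ≤ b ω)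
    (hb_temp : IsTempered μ θ θinv b)
    {η : ℕ → Ω → ℝ} (hη_meas : ∀ j, Measurable (η j))
    (hη_nonneg : ∀ j ω, 0 ≤ η j ω)
    (hη_le : ∀ j ω, η j ω ≤ b (θ^[j] ω))
    (hη_tendsto : TendstoInMeasure μ η atTop 0) :
    TendstoInMeasure μ
      (fun k ω => ∑ j ∈ Finset.range (k + 1),
        Real.exp (∑ j' ∈ Finset.Icc j k, Q (θ^[j'] ω)) * η j ω)
      atTop 0 := by
  classical
  have hQm := hQ.aestronglyMeasurable
  set Q' : Ω → ℝ := hQm.mk Q with hQ'def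
  have hQ'm : Measurable Q' := hQm.stronglyMeasurable_mk.measurable
  have hQQ' : Q =ᵐ[μ] Q' := hQm.ae_eq_mk
  have hQ'i : Integrable Q' μ := hQ.congr hQQ'
  have hI : ∫ ω, Q' ω ∂μ = ∫ ω, Q ω ∂μ := integral_congr_ae hQQ'.symm
  set c : ℝ := -(∫ ω, Q ω ∂μ) / 2 with hcdef
  have hc : 0 < c := by
    rw [hcdef]; linarith
  set σ : Ω → Ω := θinv with hσdef
  have hσmp : MeasurePreserving σ μ μ := hθinv
  have hθmp : MeasurePreserving θ μ μ := hθ.toMeasurePreserving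
  -- ergodicity of σ
  have herg : ∀ s, MeasurableSet s → σ ⁻¹' s = s → μ s = 0 ∨ μ s = 1 := by
    intro s hs hsinv
    have hθs : θ ⁻¹' s = s := by
      conv_lhs => rw [← hsinv]
      ext x
      simp only [Set.mem_preimage, hinv₁ x]
    rcases hθ.toPreErgodic.ae_empty_or_univ hs hθs with h | h
    · left; simpa using measure_congr h
    · right
      have := measure_congr h
      simpa using this
  -- iterate identity
  have hiter : ∀ k a, a ≤ k → ∀ ω, θ^[a] (σ^[k] ω) = σ^[k - a] ω := by
    intro k a
    induction a with
    | zero => intro _ ω; simp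
    | succ a ih =>
      intro hak ω
      rw [Function.iterate_succ_apply', ih (Nat.le_of_succ_le hak) ω,
        show k - a = (k - (a + 1)) + 1 from by omega, Function.iterate_succ_apply']
      exact hinv₂ _
  -- B i = sums of Q' along σ-orbit
  set B : ℕ → Ω → ℝ := fun i ω => ∑ l ∈ Finset.range (i + 1), Q' (σ^[l] ω) with hBdef
  have hBmeas : ∀ i, Measurable (B i) := fun i =>
    Finset.measurable_sum _ fun l _ => hQ'm.comp (hσmp.measurable.iterate l)
  -- a.s. upper bound on partial sums with drift
  have habove : ∀ᵐ ω ∂μ, ∃ C, ∀ n,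
      Stmt5Aux.PS (fun ω => Q' ω + c) σ n ω ≤ C := by
    refine Stmt5Aux.ae_bddAbove hσmp herg (hQ'm.add measurable_const)
      (hQ'i.add (integrable_const c)) ?_
    rw [integral_add hQ'i (integrable_const c), hI]
    simp only [integral_const, measure_univ, probReal_univ, ENNReal.toReal_one, smul_eq_mul, one_mul]
    rw [hcdef]; linarith
  -- temperedness consequence
  have hble : ∀ x : ℝ, 0 ≤ x → x ≤ Real.exp (max (Real.log x) 0) := by
    intro x hx
    rcases le_or_gt x 1 with h | h
    · calc x ≤ 1 := h
        _ = Real.exp 0 := Real.exp_zero.symm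
        _ ≤ _ := Real.exp_le_exp.mpr (le_max_right _ _)
    · calc x = Real.exp (Real.log x) := (Real.exp_log (by linarith)).symm
        _ ≤ _ := Real.exp_le_exp.mpr (le_max_left _ _)
  have htemp2 : ∀ᵐ ω ∂μ, ∃ C ≥ 1, ∀ i : ℕ, b (σ^[i] ω) ≤ C * Real.exp ((c/2) * i) := by
    filter_upwards [hb_temp] with ω hω
    obtain ⟨N, hN⟩ := eventually_atTop.mp
      (hω.2.eventually_lt_const (show (0:ℝ) < c/2 from by linarith))
    set C : ℝ := max 1 ((Finset.range (N + 1)).sup' Finset.nonempty_range_add_one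
      fun i => b (σ^[i] ω)) with hCdef
    refine ⟨C, le_max_left _ _, fun i => ?_⟩
    have hC1 : (1:ℝ) ≤ C := le_max_left _ _
    have hexppos : (1:ℝ) ≤ Real.exp ((c/2) * i) := by
      rw [show (1:ℝ) = Real.exp 0 from Real.exp_zero.symm]
      exact Real.exp_le_exp.mpr (by positivity)
    rcases le_or_gt i N with h | h
    · have hmem : i ∈ Finset.range (N + 1) := Finset.mem_range.mpr (by omega)
      have h1 : b (σ^[i] ω) ≤ C :=
        le_trans (Finset.le_sup' (fun i => b (σ^[i] ω)) hmem) (le_max_right _ _)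
      calc b (σ^[i] ω) ≤ C := h1
        _ = C * 1 := (mul_one C).symm
        _ ≤ C * Real.exp ((c/2) * i) := by
            exact mul_le_mul_of_nonneg_left hexppos (by linarith)
    · have hiN : N ≤ i := by omega
      have hipos : (0:ℝ) < i := by exact_mod_cast (by omega : 0 < i)
      have h2 := hN i hiN
      rw [div_lt_iff₀ hipos] at h2
      calc b (σ^[i] ω) ≤ Real.exp (max (Real.log (b (σ^[i] ω))) 0) := hble _ (hb_nonneg _)
        _ ≤ Real.exp ((c/2) * i) := Real.exp_le_exp.mpr (by linarith)
        _ = 1 * Real.exp ((c/2) * i) := (one_mul _).symm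
        _ ≤ C * Real.exp ((c/2) * i) := by
            exact mul_le_mul_of_nonneg_right hC1 (Real.exp_pos _).le
  -- dominating geometric bound
  have hDom : ∀ᵐ ω ∂μ, ∃ D, 0 ≤ D ∧ ∀ i : ℕ,
      Real.exp (B i ω) * b (σ^[i] ω) ≤ D * Real.exp (-(c/2) * i) := by
    filter_upwards [habove, htemp2] with ω h₁ h₂
    obtain ⟨C₁, hC₁⟩ := h₁
    obtain ⟨C₂, hC₂1, hC₂⟩ := h₂
    refine ⟨Real.exp (C₁ - c) * C₂, by positivity, fun i => ?_⟩
    have h1 : B i ω ≤ C₁ - c * (i + 1) := by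
      have h := hC₁ (i + 1)
      simp only [Stmt5Aux.PS, Finset.sum_add_distrib, Finset.sum_const,
        Finset.card_range, nsmul_eq_mul] at h
      have : B i ω + (i + 1) * c ≤ C₁ := by
        rw [hBdef]; push_cast at h ⊢; linarith
      linarith
    have h2 : Real.exp (B i ω) * b (σ^[i] ω)
        ≤ Real.exp (C₁ - c * (i + 1)) * (C₂ * Real.exp ((c/2) * i)) :=
      mul_le_mul (Real.exp_le_exp.mpr h1) (hC₂ i) (hb_nonneg _) (Real.exp_pos _).le
    refine h2.trans (le_of_eq ?_)
    rw [show (Real.exp (C₁ - c) * C₂) * Real.exp (-(c/2) * i)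
        = C₂ * (Real.exp (C₁ - c) * Real.exp (-(c/2) * i)) from by ring,
      ← Real.exp_add,
      show Real.exp (C₁ - c * (i + 1)) * (C₂ * Real.exp ((c/2) * i))
        = C₂ * (Real.exp (C₁ - c * (i+1)) * Real.exp ((c/2) * i)) from by ring,
      ← Real.exp_add]
    congr 2
    ring
  -- the tail series W
  set W : ℕ → Ω → ENNReal := fun m ω =>
    ∑' i : ℕ, ENNReal.ofReal (Real.exp (B (i + m) ω) * b (σ^[i + m] ω)) with hWdef
  have hWmeas : ∀ m, Measurable (W m) := fun m =>
    Measurable.ennreal_tsum fun i =>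
      (((hBmeas (i + m)).exp).mul (hb_meas.comp (hσmp.measurable.iterate (i + m)))).ennreal_ofReal
  have hWanti : ∀ ω, Antitone fun m => W m ω := by
    intro ω
    refine antitone_nat_of_succ_le fun m => ?_
    have hcongr : (fun i : ℕ => ENNReal.ofReal (Real.exp (B (i + (m+1)) ω) * b (σ^[i + (m+1)] ω)))
        = fun i : ℕ => (fun t : ℕ => ENNReal.ofReal (Real.exp (B (t + m) ω) * b (σ^[t + m] ω))) (i + 1) := by
      funext i
      simp only
      rw [show i + (m + 1) = (i + 1) + m from by omega]
    calc W (m+1) ω = ∑' i : ℕ, (fun t : ℕ =>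
          ENNReal.ofReal (Real.exp (B (t + m) ω) * b (σ^[t + m] ω))) (i + 1) := by
          rw [hWdef]; exact congrArg tsum hcongr
      _ ≤ W m ω := ENNReal.tsum_comp_le_tsum_of_injective
          (fun a b h => by omega) _
  have hWtend : ∀ᵐ ω ∂μ, Tendsto (fun m => W m ω) atTop (nhds 0) := by
    filter_upwards [hDom] with ω hω
    obtain ⟨D, hD0, hD⟩ := hω
    set r : ℝ := Real.exp (-(c/2)) with hrdef
    have hr0 : 0 < r := Real.exp_pos _
    have hr1 : r < 1 := by
      rw [hrdef, show (1:ℝ) = Real.exp 0 from Real.exp_zero.symm]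
      exact Real.exp_lt_exp.mpr (by linarith)
    have hrpow : ∀ n : ℕ, Real.exp (-(c/2) * n) = r ^ n := by
      intro n
      rw [hrdef, ← Real.exp_nat_mul]
      congr 1
      ring
    have hWle : ∀ m, W m ω ≤ ENNReal.ofReal ((D * r ^ m) * (1 - r)⁻¹) := by
      intro m
      have hsum : ∀ i : ℕ, Real.exp (B (i + m) ω) * b (σ^[i + m] ω) ≤ (D * r ^ m) * r ^ i := by
        intro i
        have h := hD (i + m)
        rw [hrpow (i + m), pow_add] at h
        calc Real.exp (B (i + m) ω) * b (σ^[i + m] ω) ≤ D * (r ^ i * r ^ m) := h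
          _ = (D * r ^ m) * r ^ i := by ring
      have hgeo : Summable fun i : ℕ => (D * r ^ m) * r ^ i :=
        (summable_geometric_of_lt_one hr0.le hr1).mul_left _
      calc W m ω ≤ ∑' i : ℕ, ENNReal.ofReal ((D * r ^ m) * r ^ i) :=
            ENNReal.tsum_le_tsum fun i => ENNReal.ofReal_le_ofReal (hsum i)
        _ = ENNReal.ofReal (∑' i : ℕ, (D * r ^ m) * r ^ i) :=
            (ENNReal.ofReal_tsum_of_nonneg (fun i => by positivity) hgeo).symm
        _ = ENNReal.ofReal ((D * r ^ m) * (1 - r)⁻¹) := by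
            rw [tsum_mul_left, tsum_geometric_of_lt_one hr0.le hr1]
    have hlim : Tendsto (fun m : ℕ => ENNReal.ofReal ((D * r ^ m) * (1 - r)⁻¹)) atTop (nhds 0) := by
      have h1 : Tendsto (fun m : ℕ => (D * r ^ m) * (1 - r)⁻¹) atTop (nhds 0) := by
        have h2 := tendsto_pow_atTop_nhds_zero_of_lt_one hr0.le hr1
        have h3 := (h2.const_mul D).mul_const (1 - r)⁻¹
        simpa using h3
      have := (ENNReal.continuous_ofReal.tendsto 0).comp h1
      simpa [Function.comp_def] using this
    exact tendsto_of_tendsto_of_tendsto_of_le_of_le tendsto_const_nhds hlim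
      (fun m => zero_le) hWle
  -- pullback representation
  set F' : ℕ → Ω → ℝ := fun k x => ∑ j ∈ Finset.range (k + 1),
    Real.exp (∑ j' ∈ Finset.Icc j k, Q' (θ^[j'] x)) * η j x with hF'def
  have hF'meas : ∀ k, Measurable (F' k) := fun k =>
    Finset.measurable_sum _ fun j _ =>
      ((Finset.measurable_sum _ fun j' _ =>
        hQ'm.comp (hθmp.measurable.iterate j')).exp).mul (hη_meas j)
  set G : ℕ → Ω → ℝ := fun k ω => ∑ i ∈ Finset.range (k + 1),
    Real.exp (B i ω) * η (k - i) (σ^[k] ω) with hGdef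
  have hIcc : ∀ k j, j ≤ k → ∀ ω,
      ∑ j' ∈ Finset.Icc j k, Q' (θ^[j'] (σ^[k] ω)) = B (k - j) ω := by
    intro k j hj ω
    rw [Finset.sum_congr rfl (fun j' hj' => by
      rw [hiter k j' (Finset.mem_Icc.mp hj').2] : ∀ j' ∈ Finset.Icc j k,
        Q' (θ^[j'] (σ^[k] ω)) = Q' (σ^[k - j'] ω))]
    rw [← Finset.Ico_add_one_right_eq_Icc, Finset.sum_Ico_eq_sum_range,
      show k + 1 - j = (k - j) + 1 from by omega]
    rw [Finset.sum_congr rfl (fun t ht => by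
      rw [show k - (j + t) = (k - j) + 1 - 1 - t from by omega] : ∀ t ∈ Finset.range ((k - j) + 1),
        Q' (σ^[k - (j + t)] ω) = Q' (σ^[(k - j) + 1 - 1 - t] ω))]
    rw [Finset.sum_range_reflect (fun l => Q' (σ^[l] ω)) ((k - j) + 1)]
  have hFG : ∀ k ω, F' k (σ^[k] ω) = G k ω := by
    intro k ω
    have h1 : F' k (σ^[k] ω) = ∑ j ∈ Finset.range (k + 1),
        (fun i => Real.exp (B i ω) * η (k - i) (σ^[k] ω)) ((k + 1) - 1 - j) := by
      refine Finset.sum_congr rfl fun j hj => ?_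
      have hjk : j ≤ k := Nat.lt_succ_iff.mp (Finset.mem_range.mp hj)
      simp only
      rw [hIcc k j hjk ω, show (k + 1) - 1 - j = k - j from by omega,
        show k - (k - j) = j from by omega]
    rw [h1, Finset.sum_range_reflect (fun i => Real.exp (B i ω) * η (k - i) (σ^[k] ω)) (k + 1)]
  have hQae : ∀ᵐ x ∂μ, ∀ j' : ℕ, Q (θ^[j'] x) = Q' (θ^[j'] x) :=
    ae_all_iff.mpr fun j' =>
      ((hθmp.iterate j').quasiMeasurePreserving.ae_eq_comp hQQ').mono fun x hx => hx
  -- the convergence in measure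
  rw [tendstoInMeasure_iff_dist]
  intro ε hε
  have hEq : ∀ k, μ {x | ε ≤ dist (∑ j ∈ Finset.range (k + 1),
      Real.exp (∑ j' ∈ Finset.Icc j k, Q (θ^[j'] x)) * η j x) 0}
      = μ {ω | ε ≤ G k ω} := by
    intro k
    have hae : {x | ε ≤ dist (∑ j ∈ Finset.range (k + 1),
        Real.exp (∑ j' ∈ Finset.Icc j k, Q (θ^[j'] x)) * η j x) 0}
        =ᵐ[μ] {x | ε ≤ F' k x} := by
      rw [Filter.eventuallyEq_set]
      filter_upwards [hQae] with x hx
      have hFk : ∑ j ∈ Finset.range (k + 1),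
          Real.exp (∑ j' ∈ Finset.Icc j k, Q (θ^[j'] x)) * η j x = F' k x :=
        Finset.sum_congr rfl fun j _ => by
          rw [Finset.sum_congr rfl fun j' _ => hx j']
      have hnn : 0 ≤ ∑ j ∈ Finset.range (k + 1),
          Real.exp (∑ j' ∈ Finset.Icc j k, Q (θ^[j'] x)) * η j x :=
        Finset.sum_nonneg fun j _ => mul_nonneg (Real.exp_pos _).le (hη_nonneg j x)
      simp only [Set.mem_setOf_eq, dist_zero_right, Real.norm_eq_abs, abs_of_nonneg hnn]
      rw [hFk]
    calc μ {x | ε ≤ dist (∑ j ∈ Finset.range (k + 1),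
          Real.exp (∑ j' ∈ Finset.Icc j k, Q (θ^[j'] x)) * η j x) 0}
        = μ {x | ε ≤ F' k x} := measure_congr hae
      _ = μ (σ^[k] ⁻¹' {x | ε ≤ F' k x}) :=
          ((hσmp.iterate k).measure_preimage
            (measurableSet_le measurable_const (hF'meas k)).nullMeasurableSet).symm
      _ = μ {ω | ε ≤ G k ω} := by
          congr 1
          ext ω
          simp only [Set.mem_preimage, Set.mem_setOf_eq, hFG k ω]
  have key : Tendsto (fun k => μ {ω | ε ≤ G k ω}) atTop (nhds 0) := by
    rw [ENNReal.tendsto_nhds_zero]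
    intro ε' hε'
    obtain ⟨δ, hδpos, hδle⟩ : ∃ δ : ℝ, 0 < δ ∧ ENNReal.ofReal δ ≤ ε' := by
      rcases le_or_gt 1 ε' with h | h
      · exact ⟨1, one_pos, by simpa using h⟩
      · refine ⟨ε'.toReal, ENNReal.toReal_pos hε'.ne' (h.trans ENNReal.one_lt_top).ne, ?_⟩
        rw [ENNReal.ofReal_toReal (h.trans ENNReal.one_lt_top).ne]
    refine Filter.Eventually.mono ?_ fun k hk => le_trans hk hδle
    -- choose m
    obtain ⟨m, hm1, hmW⟩ : ∃ m : ℕ, 1 ≤ m ∧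
        μ {ω | ENNReal.ofReal (ε/2) ≤ W m ω} ≤ ENNReal.ofReal (δ/2) := by
      set s : ℕ → Set Ω := fun m => {ω | ENNReal.ofReal (ε/2) ≤ W m ω} with hsdef
      have hsmeas : ∀ m, MeasurableSet (s m) := fun m =>
        measurableSet_le measurable_const (hWmeas m)
      have hsanti : Antitone s := fun m m' hmm' ω hω =>
        le_trans hω (hWanti ω hmm')
      have hnull : μ (⋂ m, s m) = 0 := by
        refine measure_eq_zero_iff_ae_notMem.mpr ?_
        filter_upwards [hWtend] with ω hω
        obtain ⟨m0, hm0⟩ := (hω.eventually_lt_const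
          (show (0:ENNReal) < ENNReal.ofReal (ε/2) from
            ENNReal.ofReal_pos.mpr (by linarith))).exists
        exact fun hmem => absurd (Set.mem_iInter.mp hmem m0) (not_le.mpr hm0)
      have htend := tendsto_measure_iInter_atTop (fun m => (hsmeas m).nullMeasurableSet)
        hsanti ⟨0, measure_ne_top μ _⟩
      rw [hnull] at htend
      have hpos : (0:ENNReal) < ENNReal.ofReal (δ/2) := ENNReal.ofReal_pos.mpr (by linarith)
      obtain ⟨m, hma, hmb⟩ := ((htend.eventually_lt_const hpos).and (eventually_ge_atTop 1)).exists
      exact ⟨m, hmb, hma.le⟩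
    have hmR : (0:ℝ) < m := by exact_mod_cast hm1
    have hm0 : (m:ℝ) ≠ 0 := ne_of_gt hmR
    -- choose M
    obtain ⟨M, hM1, hMb⟩ : ∃ M : ℝ, 1 ≤ M ∧ ∀ i < m,
        μ {ω | M < Real.exp (B i ω)} ≤ ENNReal.ofReal (δ/(4*m)) := by
      have hq : (0:ENNReal) < ENNReal.ofReal (δ/(4*m)) :=
        ENNReal.ofReal_pos.mpr (by positivity)
      have h1 : ∀ i : ℕ, ∃ Mi : ℕ, μ {ω | (Mi:ℝ) < Real.exp (B i ω)} ≤ ENNReal.ofReal (δ/(4*m)) := by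
        intro i
        have hanti : Antitone fun N : ℕ => {ω | (N:ℝ) < Real.exp (B i ω)} := by
          intro N N' hNN' ω hω
          simp only [Set.mem_setOf_eq] at hω ⊢
          exact lt_of_le_of_lt (by exact_mod_cast hNN' : (N:ℝ) ≤ (N':ℝ)) hω
        have hempty : (⋂ N : ℕ, {ω | (N:ℝ) < Real.exp (B i ω)}) = ∅ := by
          ext ω
          simp only [Set.mem_iInter, Set.mem_setOf_eq, Set.mem_empty_iff_false,
            iff_false, not_forall, not_lt]
          obtain ⟨n, hn⟩ := exists_nat_gt (Real.exp (B i ω))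
          exact ⟨n, hn.le⟩
        have htend := tendsto_measure_iInter_atTop
          (fun N => (measurableSet_lt measurable_const ((hBmeas i).exp)).nullMeasurableSet)
          hanti ⟨0, measure_ne_top μ _⟩
        rw [hempty, measure_empty] at htend
        obtain ⟨Mi, hMi⟩ := (htend.eventually_lt_const hq).exists
        exact ⟨Mi, hMi.le⟩
      choose Mi hMi using h1
      refine ⟨(((Finset.range m).sup Mi + 1 : ℕ) : ℝ), by exact_mod_cast Nat.one_le_iff_ne_zero.mpr (by omega), fun i him => ?_⟩
      refine le_trans (measure_mono fun ω hω => ?_) (hMi i)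
      simp only [Set.mem_setOf_eq] at hω ⊢
      have hle : (Mi i : ℝ) ≤ (((Finset.range m).sup Mi + 1 : ℕ) : ℝ) := by
        exact_mod_cast le_trans (Finset.le_sup (f := Mi) (Finset.mem_range.mpr him)) (Nat.le_succ _)
      exact lt_of_le_of_lt hle hω
    have hM0 : (0:ℝ) < M := lt_of_lt_of_le one_pos hM1
    -- choose K
    obtain ⟨K, hK⟩ : ∃ K, ∀ j ≥ K, μ {x | ε/(2*m*M) ≤ η j x} ≤ ENNReal.ofReal (δ/(4*m)) := by
      have hpos2 : 0 < ε/(2*m*M) := by positivity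
      have h2 := tendstoInMeasure_iff_dist.mp hη_tendsto _ hpos2
      have hset : (fun j => μ {x | ε/(2*(m:ℝ)*M) ≤ dist (η j x) ((0 : Ω → ℝ) x)})
          = fun j => μ {x | ε/(2*(m:ℝ)*M) ≤ η j x} := by
        funext j
        congr 1
        ext x
        simp [Real.dist_eq, abs_of_nonneg (hη_nonneg j x)]
      rw [hset] at h2
      have h3 := h2.eventually_lt_const (show (0:ENNReal) < ENNReal.ofReal (δ/(4*m)) from
        ENNReal.ofReal_pos.mpr (by positivity))
      obtain ⟨K, hK⟩ := eventually_atTop.mp h3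
      exact ⟨K, fun j hj => (hK j hj).le⟩
    -- final bound for k ≥ K + m
    refine eventually_atTop.mpr ⟨K + m, fun k hk => ?_⟩
    have hkm : m ≤ k := le_trans (Nat.le_add_left m K) hk
    set Hd : Ω → ℝ := fun ω => ∑ i ∈ Finset.range m,
      Real.exp (B i ω) * η (k - i) (σ^[k] ω) with hHdef
    set Td : Ω → ℝ := fun ω => ∑ i ∈ Finset.Ico m (k+1),
      Real.exp (B i ω) * η (k - i) (σ^[k] ω) with hTdef
    have hsplit : ∀ ω, G k ω = Hd ω + Td ω := by
      intro ω
      simp only [hGdef, hHdef, hTdef]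
      rw [Finset.range_eq_Ico, ← Finset.sum_Ico_consecutive _ (Nat.zero_le m)
        (by omega : m ≤ k+1), ← Finset.range_eq_Ico]
    have hsubset : {ω | ε ≤ G k ω} ⊆ {ω | ε/2 ≤ Hd ω} ∪ {ω | ε/2 ≤ Td ω} := by
      intro ω hω
      simp only [Set.mem_setOf_eq] at hω
      by_contra hcon
      simp only [Set.mem_union, Set.mem_setOf_eq, not_or, not_le] at hcon
      rw [hsplit ω] at hω
      linarith [hcon.1, hcon.2]
    have hTdle : μ {ω | ε/2 ≤ Td ω} ≤ ENNReal.ofReal (δ/2) := by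
      refine le_trans (measure_mono fun ω hω => ?_) hmW
      simp only [Set.mem_setOf_eq] at hω ⊢
      have h1 : ∀ i ∈ Finset.Ico m (k+1),
          Real.exp (B i ω) * η (k - i) (σ^[k] ω) ≤ Real.exp (B i ω) * b (σ^[i] ω) := by
        intro i hi
        obtain ⟨him, hik'⟩ := Finset.mem_Ico.mp hi
        have h := hη_le (k - i) (σ^[k] ω)
        rw [hiter k (k - i) (Nat.sub_le k i), show k - (k - i) = i from by omega] at h
        exact mul_le_mul_of_nonneg_left h (Real.exp_pos _).le
      have h2 : Td ω ≤ ∑ i ∈ Finset.Ico m (k+1), Real.exp (B i ω) * b (σ^[i] ω) :=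
        Finset.sum_le_sum h1
      have h3 : ENNReal.ofReal (∑ i ∈ Finset.Ico m (k+1), Real.exp (B i ω) * b (σ^[i] ω))
          ≤ W m ω := by
        rw [ENNReal.ofReal_sum_of_nonneg fun i _ =>
            mul_nonneg (Real.exp_pos _).le (hb_nonneg _),
          Finset.sum_Ico_eq_sum_range]
        rw [Finset.sum_congr rfl (fun t ht => by rw [Nat.add_comm m t] :
          ∀ t ∈ Finset.range (k + 1 - m),
            ENNReal.ofReal (Real.exp (B (m + t) ω) * b (σ^[m + t] ω))
            = ENNReal.ofReal (Real.exp (B (t + m) ω) * b (σ^[t + m] ω)))]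
        exact ENNReal.sum_le_tsum _
      calc ENNReal.ofReal (ε/2) ≤ ENNReal.ofReal (Td ω) := ENNReal.ofReal_le_ofReal hω
        _ ≤ ENNReal.ofReal (∑ i ∈ Finset.Ico m (k+1), Real.exp (B i ω) * b (σ^[i] ω)) :=
            ENNReal.ofReal_le_ofReal h2
        _ ≤ W m ω := h3
    have hHdle : μ {ω | ε/2 ≤ Hd ω} ≤ ENNReal.ofReal (δ/2) := by
      have hsub2 : {ω | ε/2 ≤ Hd ω} ⊆ ⋃ i ∈ Finset.range m,
          {ω | ε/(2*m) ≤ Real.exp (B i ω) * η (k - i) (σ^[k] ω)} := by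
        intro ω hω
        simp only [Set.mem_setOf_eq] at hω
        by_contra hcon
        simp only [Set.mem_iUnion, Set.mem_setOf_eq, exists_prop, not_exists, not_and,
          not_le] at hcon
        have hne : (Finset.range m).Nonempty := Finset.nonempty_range_iff.mpr (by omega)
        have hlt := Finset.sum_lt_sum_of_nonempty hne
          (f := fun i => Real.exp (B i ω) * η (k - i) (σ^[k] ω))
          (g := fun _ => ε/(2*(m:ℝ)))
          (fun i hi => hcon i hi)
        rw [Finset.sum_const, Finset.card_range, nsmul_eq_mul] at hlt
        have heq : (m:ℝ) * (ε/(2*(m:ℝ))) = ε/2 := by field_simp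
        rw [heq] at hlt
        rw [hHdef] at hω
        simp only at hω hlt
        linarith
      refine le_trans (measure_mono hsub2) (le_trans (measure_biUnion_finset_le _ _) ?_)
      have hterm : ∀ i ∈ Finset.range m,
          μ {ω | ε/(2*m) ≤ Real.exp (B i ω) * η (k - i) (σ^[k] ω)}
          ≤ ENNReal.ofReal (δ/(4*m)) + ENNReal.ofReal (δ/(4*m)) := by
        intro i hi
        have him : i < m := Finset.mem_range.mp hi
        have hsub3 : {ω | ε/(2*m) ≤ Real.exp (B i ω) * η (k - i) (σ^[k] ω)}
            ⊆ {ω | M < Real.exp (B i ω)} ∪ (σ^[k] ⁻¹' {x | ε/(2*m*M) ≤ η (k - i) x}) := by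
          intro ω hω
          simp only [Set.mem_setOf_eq] at hω
          rcases lt_or_ge M (Real.exp (B i ω)) with h | h
          · exact Or.inl h
          · refine Or.inr ?_
            simp only [Set.mem_preimage, Set.mem_setOf_eq]
            have hη0 := hη_nonneg (k - i) (σ^[k] ω)
            have h4 : ε/(2*(m:ℝ)) ≤ M * η (k - i) (σ^[k] ω) :=
              le_trans hω (mul_le_mul_of_nonneg_right h hη0)
            rw [show ε/(2*(m:ℝ)*M) = (ε/(2*(m:ℝ)))/M from by ring, div_le_iff₀ hM0]
            linarith [mul_comm M (η (k - i) (σ^[k] ω))]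
        refine le_trans (measure_mono hsub3) (le_trans (measure_union_le _ _) ?_)
        refine add_le_add (hMb i him) ?_
        rw [(hσmp.iterate k).measure_preimage
          (measurableSet_le measurable_const (hη_meas (k - i))).nullMeasurableSet]
        exact hK (k - i) (by omega)
      refine le_trans (Finset.sum_le_sum hterm) ?_
      rw [Finset.sum_const, Finset.card_range, nsmul_eq_mul,
        ← ENNReal.ofReal_add (by positivity) (by positivity),
        show ((m:ℕ) : ENNReal) = ENNReal.ofReal (m:ℝ) from (ENNReal.ofReal_natCast m).symm,
        ← ENNReal.ofReal_mul (by positivity)]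
      refine ENNReal.ofReal_le_ofReal (le_of_eq ?_)
      field_simp
      ring
    calc μ {ω | ε ≤ G k ω} ≤ μ ({ω | ε/2 ≤ Hd ω} ∪ {ω | ε/2 ≤ Td ω}) := measure_mono hsubset
      _ ≤ μ {ω | ε/2 ≤ Hd ω} + μ {ω | ε/2 ≤ Td ω} := measure_union_le _ _
      _ ≤ ENNReal.ofReal (δ/2) + ENNReal.ofReal (δ/2) := add_le_add hHdle hTdle
      _ = ENNReal.ofReal δ := by
          rw [← ENNReal.ofReal_add (by positivity) (by positivity)]
          norm_num
  exact Tendsto.congr' (Filter.EventuallyEq.of_eq (funext fun k => (hEq k).symm)) key
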